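/- arXiv:1206.0235 — 3 statements merged into one kernel-verified Lean document; each statement's English description precedes it below -/
import Mathlib

section
/- On a countable metric space, every function with values in the extended reals is of Young class LU. -/
/-- Upper semicontinuity in the sense of the paper: all sublevel sets
`{x | f x < t}`, `t ∈ ℝ`, are open. -/
def PaperUSC {X : Type*} [TopologicalSpace X] (f : X → EReal) : Prop :=
  ∀ t : ℝ, IsOpen {x : X | f x < (t : EReal)}

/-- `f` is of Young class LU: it is the pointwise limit of a nondecreasing
sequence of upper semicontinuous functions. -/
def YoungLU {X : Type*} [TopologicalSpace X] (f : X → EReal) : Prop :=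
  ∃ g : ℕ → X → EReal, (∀ n, PaperUSC (g n)) ∧ (∀ x, Monotone fun n => g n x) ∧
    (∀ x, Filter.Tendsto (fun n => g n x) Filter.atTop (nhds (f x)))

/-- On a countable metric space, every extended-real-valued function
is of Young class LU. -/
theorem youngLU_of_countable {X : Type*} [MetricSpace X] [Countable X]
    (f : X → EReal) : YoungLU f := by
  classical
  rcases isEmpty_or_nonempty X with h | h
  · exact ⟨fun _ => f, fun n t => by
      simp [Set.eq_empty_of_isEmpty {x : X | f x < (t : EReal)}],
      fun x => h.elim x, fun x => h.elim x⟩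
  · obtain ⟨e, he⟩ := exists_surjective_nat X
    refine ⟨fun n x => if ∃ k ≤ n, e k = x then f x else ⊥, ?_, ?_, ?_⟩
    · intro n t
      have : {x : X | (if ∃ k ≤ n, e k = x then f x else ⊥) < (t : EReal)} =
          ({x : X | ¬ (if ∃ k ≤ n, e k = x then f x else ⊥) < (t : EReal)})ᶜ := by
        ext x; simp
      rw [this, isOpen_compl_iff]
      have hfin : ({x : X | ¬ (if ∃ k ≤ n, e k = x then f x else ⊥) < (t : EReal)}).Finite := by
        apply Set.Finite.subset (Set.finite_range fun k : Fin (n + 1) => e k)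
        intro x hx
        simp only [Set.mem_setOf_eq] at hx
        by_cases hc : ∃ k ≤ n, e k = x
        · obtain ⟨k, hk, hek⟩ := hc
          exact ⟨⟨k, Nat.lt_succ_of_le hk⟩, hek⟩
        · simp only [hc, if_false] at hx
          exact absurd (EReal.bot_lt_coe t) hx
      exact hfin.isClosed
    · intro x m n hmn
      simp only
      by_cases hc : ∃ k ≤ m, e k = x
      · obtain ⟨k, hk, hek⟩ := hc
        rw [if_pos ⟨k, hk, hek⟩, if_pos ⟨k, hk.trans hmn, hek⟩]
      · rw [if_neg hc]; exact bot_le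
    · intro x
      obtain ⟨k, hk⟩ := he x
      apply Filter.Tendsto.congr' _ tendsto_const_nhds
      filter_upwards [Filter.eventually_ge_atTop k] with n hn
      exact (if_pos ⟨k, hn, hk⟩).symm
end

section
/- Let (X,T) be a topological dynamical system and μ an invariant Borel probability measure. Then rank(μ) ≤ k if and only if rank_ε(μ) ≤ k for all ε > 0; equivalently rank(μ) = lim_{m} rank_{ε_m}(μ) (an increasing limit) for any sequence ε_m decreasing to 0. -/
open MeasureTheory Set
open scoped ENNReal

variable {X : Type*} [MeasurableSpace X]

/-- `B : Fin k → Set X` (bases) and `n : Fin k → ℕ` (heights) define `k` disjoint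
measurable towers for `T`: all level sets `T^i B_l`, `0 ≤ i < n_l`, are measurable
and pairwise disjoint (across all towers). -/
def IsTowerSystem (T : X → X) {k : ℕ} (B : Fin k → Set X) (n : Fin k → ℕ) : Prop :=
  (∀ l, 1 ≤ n l) ∧
  (∀ l, ∀ i < n l, MeasurableSet (T^[i] '' B l)) ∧
  (∀ l l' : Fin k, ∀ i i' : ℕ, i < n l → i' < n l' → (l, i) ≠ (l', i') →
    Disjoint (T^[i] '' B l) (T^[i'] '' B l'))

/-- The remainder of the `k`-tower partition: the complement of the union of all
level sets. -/
def towerRemainder (T : X → X) {k : ℕ} (B : Fin k → Set X) (n : Fin k → ℕ) : Set X :=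
  (⋃ l, ⋃ i ∈ Finset.range (n l), T^[i] '' B l)ᶜ

/-- The collection of elements of the `k`-tower partition associated with the towers:
the level sets together with the remainder. -/
def towerSets (T : X → X) {k : ℕ} (B : Fin k → Set X) (n : Fin k → ℕ) : Set (Set X) :=
  {S | ∃ l : Fin k, ∃ i < n l, S = T^[i] '' B l} ∪ {towerRemainder T B n}

/-- `Ps ≻_ε Qs` : there exists a set `Y` of measure at least `1 - ε` such that
`Ps` restricted to `Y` refines `Qs` restricted to `Y`. -/
def EpsRefines (μ : Measure X) (Ps Qs : Set (Set X)) (ε : ℝ) : Prop :=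
  ∃ Y : Set X, MeasurableSet Y ∧ ENNReal.ofReal (1 - ε) ≤ μ Y ∧
    ∀ A ∈ Ps, ∃ Q ∈ Qs, A ∩ Y ⊆ Q

/-- A finite measurable partition of `X`. -/
def IsFinPartition (Qs : Finset (Set X)) : Prop :=
  (∀ Q ∈ Qs, MeasurableSet Q) ∧ ⋃₀ (Qs : Set (Set X)) = univ ∧
    (Qs : Set (Set X)).Pairwise Disjoint

/-- `rank μ T ≤ k`: for any finite partition `Qs` and any `ε > 0` there is a
`k`-tower partition `Ps` with remainder of measure `< ε` such that `Ps ≻_ε Qs`. -/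
def RankLE (μ : Measure X) (T : X → X) (k : ℕ) : Prop :=
  ∀ Qs : Finset (Set X), IsFinPartition Qs → ∀ ε : ℝ, 0 < ε →
    ∃ (B : Fin k → Set X) (n : Fin k → ℕ), IsTowerSystem T B n ∧
      μ (towerRemainder T B n) < ENNReal.ofReal ε ∧
      EpsRefines μ (towerSets T B n) (↑Qs) ε

/-- The rank of the measure-preserving system `(X, μ, T)`, an element of `ℕ ∪ {∞}`. -/
noncomputable def rank (μ : Measure X) (T : X → X) : ℕ∞ :=
  sInf {c : ℕ∞ | ∃ k : ℕ, RankLE μ T k ∧ c = k}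

section Metric
variable [PseudoMetricSpace X]

/-- `rank_ε(μ) ≤ k`: there is a `k`-tower partition `Ps` with remainder of measure
`< ε` and a set `X_ε` of measure `> 1 - ε` such that all elements of `Ps`
restricted to `X_ε` have diameter `< ε`. -/
def RankEpsLE (μ : Measure X) (T : X → X) (ε : ℝ) (k : ℕ) : Prop :=
  ∃ (B : Fin k → Set X) (n : Fin k → ℕ), IsTowerSystem T B n ∧
    μ (towerRemainder T B n) < ENNReal.ofReal ε ∧
    ∃ Xe : Set X, MeasurableSet Xe ∧ ENNReal.ofReal (1 - ε) < μ Xe ∧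
      ∀ A ∈ towerSets T B n, EMetric.diam (A ∩ Xe) < ENNReal.ofReal ε

/-- The `ε`-rank of `(X, μ, T)`, an element of `ℕ ∪ {∞}`. -/
noncomputable def rankEps (μ : Measure X) (T : X → X) (ε : ℝ) : ℕ∞ :=
  sInf {c : ℕ∞ | ∃ k : ℕ, RankEpsLE μ T ε k ∧ c = k}

end Metric

section AuxLemmas
variable {X : Type*} [MeasurableSpace X]

lemma tower_pad (T : X → X) {k k' : ℕ} (hkk' : k ≤ k')
    {B : Fin k → Set X} {n : Fin k → ℕ} (h : IsTowerSystem T B n) :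
    ∃ (B' : Fin k' → Set X) (n' : Fin k' → ℕ), IsTowerSystem T B' n' ∧
      towerRemainder T B' n' = towerRemainder T B n ∧
      towerSets T B' n' ⊆ towerSets T B n ∪ {(∅ : Set X)} := by
  classical
  obtain ⟨h1, h2, h3⟩ := h
  set B' : Fin k' → Set X := fun l => if hl : (l : ℕ) < k then B ⟨l, hl⟩ else ∅ with hB'
  set n' : Fin k' → ℕ := fun l => if hl : (l : ℕ) < k then n ⟨l, hl⟩ else 1 with hn'
  have hUnion : (⋃ l, ⋃ i ∈ Finset.range (n' l), T^[i] '' B' l)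
      = ⋃ l, ⋃ i ∈ Finset.range (n l), T^[i] '' B l := by
    ext x
    simp only [Set.mem_iUnion, Finset.mem_range]
    constructor
    · rintro ⟨l, i, hi, hx⟩
      by_cases hl : (l : ℕ) < k
      · exact ⟨⟨l, hl⟩, i, by simpa [hn', hl] using hi, by simpa [hB', hl] using hx⟩
      · simp [hB', hl] at hx
    · rintro ⟨l, i, hi, hx⟩
      refine ⟨⟨(l : ℕ), lt_of_lt_of_le l.isLt hkk'⟩, i, ?_, ?_⟩
      · simpa [hn', l.isLt] using hi
      · simpa [hB', l.isLt] using hx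
  refine ⟨B', n', ⟨?_, ?_, ?_⟩, ?_, ?_⟩
  · intro l; by_cases hl : (l : ℕ) < k
    · simpa [hn', hl] using h1 ⟨l, hl⟩
    · simp [hn', hl]
  · intro l i hi
    by_cases hl : (l : ℕ) < k
    · simp only [hB', hl, dif_pos]
      exact h2 ⟨l, hl⟩ i (by simpa [hn', hl] using hi)
    · simp [hB', hl]
  · intro l l' i i' hi hi' hne
    by_cases hl : (l : ℕ) < k
    · by_cases hl' : (l' : ℕ) < k
      · simp only [hB', hl, hl', dif_pos]
        refine h3 ⟨l, hl⟩ ⟨l', hl'⟩ i i' (by simpa [hn', hl] using hi)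
          (by simpa [hn', hl'] using hi') ?_
        intro hcon
        apply hne
        have hl2 : (l : ℕ) = (l' : ℕ) := congrArg (fun p => ((p.1 : Fin k) : ℕ)) hcon
        have hi2 : i = i' := congrArg Prod.snd hcon
        exact Prod.ext (Fin.ext hl2) hi2
      · simp [hB', hl', Set.image_empty]
    · simp [hB', hl, Set.image_empty]
  · unfold towerRemainder
    rw [hUnion]
  · rintro S (⟨l, i, hi, rfl⟩ | hS)
    · by_cases hl : (l : ℕ) < k
      · exact Or.inl (Or.inl ⟨⟨l, hl⟩, i, by simpa [hn', hl] using hi, by simp [hB', hl]⟩)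
      · right
        simp [hB', hl, Set.image_empty]
    · left
      right
      simp only [Set.mem_singleton_iff] at hS ⊢
      rw [hS]; unfold towerRemainder; rw [hUnion]


lemma nonempty_of_prob (μ : Measure X) [IsProbabilityMeasure μ] : Nonempty X := by
  by_contra hc
  rw [not_nonempty_iff] at hc
  have h1 : μ univ = 1 := measure_univ
  rw [Set.univ_eq_empty_iff.mpr hc, measure_empty] at h1
  exact zero_ne_one h1

lemma rankEpsLE_mono_eps [PseudoMetricSpace X] {μ : Measure X} {T : X → X} {ε ε' : ℝ} {k : ℕ}
    (h : RankEpsLE μ T ε k) (hee : ε ≤ ε') : RankEpsLE μ T ε' k := by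
  obtain ⟨B, n, hsys, hrem, Xe, hXm, hXμ, hdiam⟩ := h
  exact ⟨B, n, hsys, hrem.trans_le (ENNReal.ofReal_le_ofReal hee), Xe, hXm,
    lt_of_le_of_lt (ENNReal.ofReal_le_ofReal (by linarith)) hXμ,
    fun A hA => (hdiam A hA).trans_le (ENNReal.ofReal_le_ofReal hee)⟩

lemma rankEpsLE_mono_k [PseudoMetricSpace X] {μ : Measure X} {T : X → X} {ε : ℝ} {k k' : ℕ}
    (hε : 0 < ε) (h : RankEpsLE μ T ε k) (hkk' : k ≤ k') : RankEpsLE μ T ε k' := by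
  obtain ⟨B, n, hsys, hrem, Xe, hXm, hXμ, hdiam⟩ := h
  obtain ⟨B', n', hsys', hrem', hsub⟩ := tower_pad T hkk' hsys
  refine ⟨B', n', hsys', hrem' ▸ hrem, Xe, hXm, hXμ, fun A hA => ?_⟩
  rcases hsub hA with hA' | hA'
  · exact hdiam A hA'
  · simp only [Set.mem_singleton_iff] at hA'
    subst hA'
    rw [Set.empty_inter]
    exact lt_of_eq_of_lt (Metric.ediam_empty (X := X)) (ENNReal.ofReal_pos.mpr hε)

lemma rankEpsLE_of_rankLE {X : Type*} [MeasurableSpace X] [MetricSpace X] [CompactSpace X]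
    [BorelSpace X] {μ : Measure X} [IsProbabilityMeasure μ] {T : X → X} {k : ℕ}
    (h : RankLE μ T k) {ε : ℝ} (hε : 0 < ε) : RankEpsLE μ T ε k := by
  classical
  set ε' : ℝ := min ε 1 / 2 with hε'def
  have hε'pos : 0 < ε' := by
    have := lt_min hε one_pos
    positivity
  have hε'le : ε' ≤ ε / 2 := by
    have : min ε 1 ≤ ε := min_le_left _ _
    simp only [hε'def]; linarith
  have hε'half : ε' ≤ 1 / 2 := by
    have : min ε 1 ≤ 1 := min_le_right _ _
    simp only [hε'def]; linarith
  set r : ℝ := ε' / 3 with hrdef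
  have hrpos : 0 < r := by positivity
  -- finite cover by balls of radius r
  obtain ⟨t, ht⟩ := isCompact_univ.elim_finite_subcover (fun x : X => Metric.ball x r)
    (fun x => Metric.isOpen_ball) (fun x _ => Set.mem_iUnion.mpr ⟨x, Metric.mem_ball_self hrpos⟩)
  set g : ℕ → Set X := fun i =>
    if hi : i < t.card then Metric.ball ((t.equivFin.symm ⟨i, hi⟩ : {x // x ∈ t}) : X) r else ∅
    with hgdef
  have hgmeas : ∀ i, MeasurableSet (g i) := by
    intro i
    by_cases hi : i < t.card
    · simp only [hgdef, hi, dif_pos]; exact Metric.isOpen_ball.measurableSet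
    · simp [hgdef, hi]
  have hgunion : (⋃ i, g i) = univ := by
    apply Set.eq_univ_of_univ_subset
    intro x hx
    obtain ⟨y, hyt, hxy⟩ : ∃ y ∈ t, x ∈ Metric.ball y r := by
      have := ht (Set.mem_univ x)
      simpa using this
    set j := t.equivFin ⟨y, hyt⟩ with hj
    refine Set.mem_iUnion.mpr ⟨(j : ℕ), ?_⟩
    have hjlt : (j : ℕ) < t.card := j.isLt
    simp only [hgdef, hjlt, dif_pos]
    have : t.equivFin.symm ⟨(j : ℕ), hjlt⟩ = ⟨y, hyt⟩ := by
      rw [show (⟨(j : ℕ), hjlt⟩ : Fin t.card) = j from Fin.eta j hjlt, hj,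
        Equiv.symm_apply_apply]
    rw [this]
    exact hxy
  set D : ℕ → Set X := disjointed g with hDdef
  set Qs : Finset (Set X) := (Finset.range t.card).image D with hQsdef
  have hQpart : IsFinPartition Qs := by
    refine ⟨?_, ?_, ?_⟩
    · intro Q hQ
      obtain ⟨i, _, rfl⟩ := Finset.mem_image.mp hQ
      exact MeasurableSet.disjointed hgmeas i
    · rw [hQsdef, Finset.coe_image, Finset.coe_range, Set.sUnion_image]
      apply Set.eq_univ_of_univ_subset
      rw [← hgunion, ← iUnion_disjointed]
      refine Set.iUnion_subset fun i => ?_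
      by_cases hi : i < t.card
      · exact Set.subset_biUnion_of_mem hi
      · have : D i ⊆ g i := disjointed_subset g i
        have hgi : g i = ∅ := by simp [hgdef, hi]
        rw [hDdef] at this ⊢
        intro x hxi
        exact absurd (hgi ▸ this hxi) (Set.notMem_empty x)
    · intro A hA B hB hAB
      obtain ⟨i, _, rfl⟩ := Finset.mem_image.mp (Finset.mem_coe.mp hA)
      obtain ⟨j, _, rfl⟩ := Finset.mem_image.mp (Finset.mem_coe.mp hB)
      have hij : i ≠ j := fun hcon => hAB (by rw [hcon])
      exact disjoint_disjointed g hij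
  obtain ⟨B, n, hsys, hrem, Y, hYm, hYμ, href⟩ := h Qs hQpart ε' hε'pos
  refine ⟨B, n, hsys, hrem.trans_le (ENNReal.ofReal_le_ofReal (by linarith)), Y, hYm, ?_, ?_⟩
  · by_cases h1 : ε < 1
    · refine lt_of_lt_of_le ?_ hYμ
      rw [ENNReal.ofReal_lt_ofReal_iff (by linarith : (0:ℝ) < 1 - ε')]
      linarith
    · push_neg at h1
      have h0 : ENNReal.ofReal (1 - ε) = 0 := by
        rw [ENNReal.ofReal_eq_zero]; linarith
      rw [h0]
      exact lt_of_lt_of_le (ENNReal.ofReal_pos.mpr (by linarith)) hYμ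
  · intro A hA
    obtain ⟨Q, hQ, hsub⟩ := href A hA
    obtain ⟨i, hi, rfl⟩ := Finset.mem_image.mp (Finset.mem_coe.mp hQ)
    have hilt : i < t.card := Finset.mem_range.mp hi
    have hball : D i ⊆ Metric.ball ((t.equivFin.symm ⟨i, hilt⟩ : {x // x ∈ t}) : X) r := by
      refine (disjointed_subset g i).trans ?_
      simp [hgdef, hilt]
    have hAY : A ∩ Y ⊆ Metric.ball ((t.equivFin.symm ⟨i, hilt⟩ : {x // x ∈ t}) : X) r :=
      hsub.trans hball
    calc EMetric.diam (A ∩ Y)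
        ≤ EMetric.diam (Metric.ball ((t.equivFin.symm ⟨i, hilt⟩ : {x // x ∈ t}) : X) r) :=
          EMetric.diam_mono hAY
      _ ≤ ENNReal.ofReal (2 * r) := by
          refine EMetric.diam_le fun x hx y hy => ?_
          rw [edist_dist]
          refine ENNReal.ofReal_le_ofReal ?_
          have hx' := Metric.mem_ball.mp hx
          have hy' := Metric.mem_ball.mp hy
          have := dist_triangle_right x y ((t.equivFin.symm ⟨i, hilt⟩ : {x // x ∈ t}) : X)
          linarith
      _ < ENNReal.ofReal ε := by
          rw [ENNReal.ofReal_lt_ofReal_iff hε]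
          rw [hrdef]; linarith


-- helper: 1 - ofReal(1-a) ≤ ofReal a  for 0 ≤ a
lemma helper1 {a : ℝ} (ha : 0 ≤ a) :
    (1 : ℝ≥0∞) - ENNReal.ofReal (1 - a) ≤ ENNReal.ofReal a := by
  rw [tsub_le_iff_right]
  by_cases h1 : a ≤ 1
  · rw [← ENNReal.ofReal_add ha (by linarith)]
    rw [show a + (1 - a) = 1 by ring, ENNReal.ofReal_one]
  · push_neg at h1
    calc (1 : ℝ≥0∞) = ENNReal.ofReal 1 := ENNReal.ofReal_one.symm
      _ ≤ ENNReal.ofReal a := ENNReal.ofReal_le_ofReal h1.le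
      _ ≤ ENNReal.ofReal a + ENNReal.ofReal (1 - a) := le_self_add

lemma rankLE_of_rankEpsLE {X : Type*} [MeasurableSpace X] [MetricSpace X] [CompactSpace X]
    [BorelSpace X] {μ : Measure X} [IsProbabilityMeasure μ] {T : X → X} {k : ℕ}
    (h : ∀ δ : ℝ, 0 < δ → ∃ k' ≤ k, RankEpsLE μ T δ k') : RankLE μ T k := by
  classical
  intro Qs hQs ε hε
  obtain ⟨hQmeas, hQunion, hQdisj⟩ := hQs
  have hXne : Nonempty X := nonempty_of_prob μ
  have hQne : Qs.Nonempty := by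
    by_contra hc
    rw [Finset.not_nonempty_iff_eq_empty] at hc
    rw [hc] at hQunion
    simp only [Finset.coe_empty, Set.sUnion_empty] at hQunion
    obtain ⟨x⟩ := hXne
    exact absurd (hQunion ▸ Set.mem_univ x) (Set.notMem_empty x)
  set c : ℝ := ε / (2 * (Qs.card + 1)) with hcdef
  have hcpos : 0 < c := by positivity
  -- compact approximations of partition elements
  have hK : ∀ Q ∈ Qs, ∃ K, K ⊆ Q ∧ IsCompact K ∧ μ (Q \ K) ≤ ENNReal.ofReal c := by
    intro Q hQ
    obtain ⟨K, hKQ, hKc, hlt⟩ := (hQmeas Q hQ).exists_isCompact_lt_add (measure_ne_top μ Q)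
      (ε := ENNReal.ofReal c) (by simp [ENNReal.ofReal_eq_zero, not_le, hcpos])
    refine ⟨K, hKQ, hKc, ?_⟩
    rw [measure_diff hKQ hKc.measurableSet.nullMeasurableSet (measure_ne_top μ K)]
    rw [tsub_le_iff_right]
    rw [add_comm]
    exact hlt.le
  choose! L hL1 hL2 hL3 using hK
  -- positive separation between the compacts
  have hsep : ∀ p : Set X × Set X, ∃ δ : ℝ, 0 < δ ∧
      (p.1 ∈ Qs → p.2 ∈ Qs → p.1 ≠ p.2 → ∀ x ∈ L p.1, ∀ y ∈ L p.2, δ ≤ dist x y) := by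
    rintro ⟨Q, Q'⟩
    by_cases hmem : Q ∈ Qs ∧ Q' ∈ Qs ∧ Q ≠ Q'
    · obtain ⟨hQ, hQ', hne⟩ := hmem
      have hdisj : Disjoint (L Q) (L Q') :=
        (hQdisj (Finset.mem_coe.mpr hQ) (Finset.mem_coe.mpr hQ') hne).mono
          (hL1 Q hQ) (hL1 Q' hQ')
      obtain ⟨δ, hδ, hth⟩ := hdisj.exists_thickenings (hL2 Q hQ) (hL2 Q' hQ').isClosed
      refine ⟨δ, hδ, fun _ _ _ x hx y hy => ?_⟩
      by_contra hlt
      push_neg at hlt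
      have hy1 : y ∈ Metric.thickening δ (L Q) :=
        Metric.mem_thickening_iff.mpr ⟨x, hx, by rwa [dist_comm]⟩
      have hy2 : y ∈ Metric.thickening δ (L Q') :=
        Metric.mem_thickening_iff.mpr ⟨y, hy, by simpa using hδ⟩
      exact hth.le_bot ⟨hy1, hy2⟩
    · exact ⟨1, one_pos, fun h1 h2 h3 => absurd ⟨h1, h2, h3⟩ hmem⟩
  choose d hd1 hd2 using hsep
  have hprodne : (Qs ×ˢ Qs).Nonempty := hQne.product hQne
  set δ0 : ℝ := (Qs ×ˢ Qs).inf' hprodne d with hδ0def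
  have hδ0pos : 0 < δ0 := by
    rw [hδ0def, Finset.lt_inf'_iff]
    exact fun p _ => hd1 p
  have hδ0le : ∀ Q ∈ Qs, ∀ Q' ∈ Qs, δ0 ≤ d (Q, Q') := fun Q hQ Q' hQ' =>
    Finset.inf'_le _ (Finset.mem_product.mpr ⟨hQ, hQ'⟩)
  set δ : ℝ := min (ε / 2) δ0 with hδdef
  have hδpos : 0 < δ := lt_min (by linarith) hδ0pos
  have hδε : δ ≤ ε / 2 := min_le_left _ _
  have hδδ0 : δ ≤ δ0 := min_le_right _ _
  obtain ⟨k', hk'le, hk'⟩ := h δ hδpos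
  obtain ⟨B0, n0, hsys0, hrem0, Xe, hXem, hXeμ, hdiam0⟩ := hk'
  obtain ⟨B, n, hsys, hremEq, hsetsub⟩ := tower_pad T hk'le hsys0
  refine ⟨B, n, hsys, ?_, ?_⟩
  · rw [hremEq]
    exact hrem0.trans_le (ENNReal.ofReal_le_ofReal (by linarith))
  · -- EpsRefines
    set KU : Set X := ⋃ Q ∈ Qs, L Q with hKUdef
    have hKUm : MeasurableSet KU :=
      Qs.measurableSet_biUnion fun Q hQ => (hL2 Q hQ).measurableSet
    set Y : Set X := Xe ∩ KU with hYdef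
    have hYm : MeasurableSet Y := hXem.inter hKUm
    refine ⟨Y, hYm, ?_, ?_⟩
    · -- measure bound
      have hKUc : μ KUᶜ ≤ ENNReal.ofReal (ε / 2) := by
        have hsubc : KUᶜ ⊆ ⋃ Q ∈ Qs, (Q \ L Q) := by
          intro x hx
          obtain ⟨Q, hQ, hxQ⟩ := Set.mem_sUnion.mp (hQunion ▸ Set.mem_univ x)
          have hQ' : Q ∈ Qs := Finset.mem_coe.mp hQ
          have hxL : x ∉ L Q := fun hxl => hx (Set.mem_biUnion hQ' hxl)
          exact Set.mem_biUnion hQ' ⟨hxQ, hxL⟩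
        calc μ KUᶜ ≤ μ (⋃ Q ∈ Qs, (Q \ L Q)) := measure_mono hsubc
          _ ≤ ∑ Q ∈ Qs, μ (Q \ L Q) := measure_biUnion_finset_le _ _
          _ ≤ Qs.card • ENNReal.ofReal c := Finset.sum_le_card_nsmul _ _ _ fun Q hQ => hL3 Q hQ
          _ = (Qs.card : ℝ≥0∞) * ENNReal.ofReal c := by rw [nsmul_eq_mul]
          _ = ENNReal.ofReal ((Qs.card : ℝ) * c) := by
              rw [← ENNReal.ofReal_natCast, ← ENNReal.ofReal_mul (Nat.cast_nonneg _)]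
          _ ≤ ENNReal.ofReal (ε / 2) := by
              refine ENNReal.ofReal_le_ofReal ?_
              have hcard1 : (0:ℝ) < (Qs.card : ℝ) + 1 := by positivity
              have heq : ((Qs.card : ℝ) + 1) * c = ε / 2 := by
                rw [hcdef]; field_simp
              nlinarith [hcpos.le]
      have hXec : μ Xeᶜ ≤ ENNReal.ofReal (ε / 2) := by
        rw [prob_compl_eq_one_sub hXem]
        have h1 : ENNReal.ofReal (1 - δ) ≤ μ Xe := hXeμ.le
        calc (1 : ℝ≥0∞) - μ Xe ≤ 1 - ENNReal.ofReal (1 - δ) := tsub_le_tsub_left h1 1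
          _ ≤ ENNReal.ofReal δ := helper1 hδpos.le
          _ ≤ ENNReal.ofReal (ε / 2) := ENNReal.ofReal_le_ofReal hδε
      have hYc : μ Yᶜ ≤ ENNReal.ofReal ε := by
        rw [hYdef, Set.compl_inter]
        calc μ (Xeᶜ ∪ KUᶜ) ≤ μ Xeᶜ + μ KUᶜ := measure_union_le _ _
          _ ≤ ENNReal.ofReal (ε / 2) + ENNReal.ofReal (ε / 2) := add_le_add hXec hKUc
          _ = ENNReal.ofReal ε := by
              rw [← ENNReal.ofReal_add (by linarith) (by linarith)]
              norm_num
      have hμY : μ Y = 1 - μ Yᶜ := by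
        rw [← prob_compl_eq_one_sub hYm.compl, compl_compl]
      rw [hμY]
      calc ENNReal.ofReal (1 - ε) = ENNReal.ofReal 1 - ENNReal.ofReal ε :=
            ENNReal.ofReal_sub 1 hε.le
        _ = 1 - ENNReal.ofReal ε := by rw [ENNReal.ofReal_one]
        _ ≤ 1 - μ Yᶜ := tsub_le_tsub_left hYc 1
    · -- refinement
      intro A hA
      obtain ⟨Q0, hQ0ne⟩ := hQne
      rcases hsetsub hA with hA0 | hA0
      · have hdA := hdiam0 A hA0
        by_cases hne : (A ∩ Y).Nonempty
        · obtain ⟨x0, hx0A, hx0Xe, hx0KU⟩ := hne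
          obtain ⟨Qa, hQa, hx0L⟩ := Set.mem_iUnion₂.mp hx0KU
          refine ⟨Qa, Finset.mem_coe.mpr hQa, ?_⟩
          rintro y ⟨hyA, hyXe, hyKU⟩
          obtain ⟨Qb, hQb, hyL⟩ := Set.mem_iUnion₂.mp hyKU
          have hxy : dist x0 y < δ := by
            have h1 : edist x0 y ≤ EMetric.diam (A ∩ Xe) :=
              EMetric.edist_le_diam_of_mem ⟨hx0A, hx0Xe⟩ ⟨hyA, hyXe⟩
            have h2 : edist x0 y < ENNReal.ofReal δ := lt_of_le_of_lt h1 hdA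
            rwa [edist_lt_ofReal] at h2
          have hQab : Qa = Qb := by
            by_contra hne'
            have := hd2 (Qa, Qb) hQa hQb hne' x0 hx0L y hyL
            have h3 := hδ0le Qa hQa Qb hQb
            linarith
          exact hL1 Qa hQa (hQab ▸ hyL)
        · rw [Set.not_nonempty_iff_eq_empty] at hne
          exact ⟨Q0, Finset.mem_coe.mpr hQ0ne, by rw [hne]; exact Set.empty_subset _⟩
      · simp only [Set.mem_singleton_iff] at hA0
        subst hA0
        exact ⟨Q0, Finset.mem_coe.mpr hQ0ne, by simp⟩


end AuxLemmas

/-- `rank(μ) ≤ k` iff `rank_ε(μ) ≤ k` for every `ε > 0`; equivalently, for any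
sequence `ε_m ↓ 0`, `rank(μ)` is the increasing limit (supremum) of `rank_{ε_m}(μ)`. -/
theorem rank_eq_lim_rankEps {X : Type*} [MeasurableSpace X] [MetricSpace X] [CompactSpace X]
    [BorelSpace X] (T : X → X) (hT : Continuous T)
    (μ : Measure X) [IsProbabilityMeasure μ] (hinv : MeasurePreserving T μ μ) :
    (∀ k : ℕ, rank μ T ≤ (k : ℕ∞) ↔ ∀ ε : ℝ, 0 < ε → rankEps μ T ε ≤ (k : ℕ∞)) ∧
    (∀ e : ℕ → ℝ, (∀ m, 0 < e m) → Antitone e →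
      Filter.Tendsto e Filter.atTop (nhds 0) →
      rank μ T = ⨆ m, rankEps μ T (e m)) := by
  have main1 : ∀ k : ℕ, rank μ T ≤ (k : ℕ∞) ↔ ∀ ε : ℝ, 0 < ε → rankEps μ T ε ≤ (k : ℕ∞) := by
    intro k
    constructor
    · intro hrk ε hε
      have hne : {c : ℕ∞ | ∃ k0 : ℕ, RankLE μ T k0 ∧ c = k0}.Nonempty := by
        by_contra hc
        rw [Set.not_nonempty_iff_eq_empty] at hc
        rw [rank, hc, sInf_empty] at hrk
        exact absurd hrk (by simp)
      obtain ⟨k0, hk0, hEq⟩ := csInf_mem hne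
      have hk0k : (k0 : ℕ∞) ≤ k := by
        rw [rank, hEq] at hrk; exact hrk
      calc rankEps μ T ε ≤ (k0 : ℕ∞) := sInf_le ⟨k0, rankEpsLE_of_rankLE hk0 hε, rfl⟩
        _ ≤ k := hk0k
    · intro hall
      have hR : RankLE μ T k := by
        apply rankLE_of_rankEpsLE
        intro δ hδ
        have h1 := hall δ hδ
        have hne : {c : ℕ∞ | ∃ k0 : ℕ, RankEpsLE μ T δ k0 ∧ c = k0}.Nonempty := by
          by_contra hc
          rw [Set.not_nonempty_iff_eq_empty] at hc
          rw [rankEps, hc, sInf_empty] at h1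
          exact absurd h1 (by simp)
        obtain ⟨k0, hk0, hEq⟩ := csInf_mem hne
        have hk0k : (k0 : ℕ∞) ≤ k := by
          rw [rankEps, hEq] at h1; exact h1
        exact ⟨k0, Nat.cast_le.mp hk0k, hk0⟩
      exact sInf_le ⟨k, hR, rfl⟩
  refine ⟨main1, ?_⟩
  intro e he hanti hlim
  apply le_antisymm
  · by_cases htop : (⨆ m, rankEps μ T (e m)) = ⊤
    · rw [htop]; exact le_top
    · obtain ⟨k, hk⟩ := WithTop.ne_top_iff_exists.mp htop
      rw [← hk]
      refine (main1 k).mpr fun ε hε => ?_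
      obtain ⟨m, hm⟩ := (hlim.eventually_lt_const hε).exists
      have hmono : rankEps μ T ε ≤ rankEps μ T (e m) := by
        apply sInf_le_sInf
        rintro c ⟨k0, hk0, rfl⟩
        exact ⟨k0, rankEpsLE_mono_eps hk0 hm.le, rfl⟩
      calc rankEps μ T ε ≤ rankEps μ T (e m) := hmono
        _ ≤ ⨆ m, rankEps μ T (e m) := le_iSup (fun m => rankEps μ T (e m)) m
        _ = k := hk.symm
  · refine iSup_le fun m => le_sInf ?_
    rintro c ⟨k0, hk0, rfl⟩
    exact sInf_le ⟨k0, rankEpsLE_of_rankLE hk0 (he m), rfl⟩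
end

section
/- Let (X,T) be an invertible topological dynamical system (T a homeomorphism of a compact metric space). For every ε > 0, the function μ ↦ rank_ε(μ) from 𝓜_T(X) (with the weak-star topology) to ℕ ∪ {∞} is upper semicontinuous. -/
open MeasureTheory Set
open scoped ENNReal

variable {X : Type*} [MeasurableSpace X]

open Filter Metric
open scoped Topology

lemma eventually_closed_lt {Y : Type*} [MeasurableSpace Y] [MetricSpace Y]
    [OpensMeasurableSpace Y] {μ : ProbabilityMeasure Y} {F : Set Y} (hF : IsClosed F)
    {c : ℝ≥0∞} (h : μ.toMeasure F < c) :
    ∀ᶠ ν : ProbabilityMeasure Y in 𝓝 μ, ν.toMeasure F < c := by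
  have hls := ProbabilityMeasure.limsup_measure_closed_le_of_tendsto
    (μs := id) (L := 𝓝 μ) tendsto_id hF
  exact eventually_lt_of_limsup_lt (lt_of_le_of_lt hls h)

lemma eventually_lt_open {Y : Type*} [MeasurableSpace Y] [MetricSpace Y]
    [OpensMeasurableSpace Y] {μ : ProbabilityMeasure Y} {U : Set Y} (hU : IsOpen U)
    {c : ℝ≥0∞} (h : c < μ.toMeasure U) :
    ∀ᶠ ν : ProbabilityMeasure Y in 𝓝 μ, c < ν.toMeasure U := by
  have hls := ProbabilityMeasure.le_liminf_measure_open_of_tendsto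
    (μs := id) (L := 𝓝 μ) tendsto_id hU
  exact eventually_lt_of_lt_liminf (lt_of_lt_of_le h hls)

lemma exists_pos_add_mul_lt {a b : ℝ≥0∞} (M : ℝ≥0∞) (hM : M ≠ ⊤) (h : a < b) :
    ∃ δ : ℝ≥0∞, 0 < δ ∧ δ ≠ ⊤ ∧ a + M * δ < b := by
  obtain ⟨c, hac, hcb⟩ := exists_between h
  refine ⟨(c - a) / (M + 1), ENNReal.div_pos (by simpa [tsub_eq_zero_iff_le, not_le] using hac)
    (by simp [hM]), ?_, ?_⟩
  · exact (ENNReal.div_lt_top (by simp [hcb.ne_top]) (by simp)).ne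
  · calc a + M * ((c - a) / (M + 1)) ≤ a + (M + 1) * ((c - a) / (M + 1)) := by
          gcongr; exact le_self_add
      _ = a + (c - a) := by rw [ENNReal.mul_div_cancel' (by simp) (by simp [hM])]
      _ = c := add_tsub_cancel_of_le hac.le
      _ < b := hcb

section Main
variable {Y : Type*} [MetricSpace Y] [CompactSpace Y] [MeasurableSpace Y] [BorelSpace Y]

lemma iterate_image_open (T : Y ≃ₜ Y) (i : ℕ) {U : Set Y} (hU : IsOpen U) :
    IsOpen ((⇑T)^[i] '' U) := by
  induction i with
  | zero => simpa using hU
  | succ m ih =>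
      rw [Function.iterate_succ', Set.image_comp]
      exact T.isOpenMap _ ih

set_option maxHeartbeats 1600000 in
lemma rankEpsLE_eventually (T : Y ≃ₜ Y) {ε : ℝ} (hε : 0 < ε) {k : ℕ}
    {μ : ProbabilityMeasure Y}
    (hinv : MeasurePreserving T μ.toMeasure μ.toMeasure)
    (h : RankEpsLE μ.toMeasure T ε k) :
    ∀ᶠ ν : ProbabilityMeasure Y in 𝓝 μ, RankEpsLE ν.toMeasure T ε k := by
  classical
  obtain ⟨B, n, ⟨hn1, hmeas, hdisj⟩, hR, Xe, hXem, hXe, hdiam⟩ := h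
  set μm := μ.toMeasure with hμm
  -- iterate facts
  have hTcont : ∀ i : ℕ, Continuous ((⇑T)^[i]) := fun i => T.continuous.iterate i
  have hTinj : ∀ i : ℕ, Function.Injective ((⇑T)^[i]) :=
    fun i => (T.bijective.iterate i).injective
  have hLI : ∀ i : ℕ, Function.LeftInverse ((⇑T.symm)^[i]) ((⇑T)^[i]) :=
    fun i => Function.LeftInverse.iterate (fun x => T.symm_apply_apply x) i
  have hRI : ∀ i : ℕ, Function.RightInverse ((⇑T.symm)^[i]) ((⇑T)^[i]) :=
    fun i => Function.LeftInverse.iterate (fun x => T.apply_symm_apply x) i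
  have himg_pre : ∀ (i : ℕ) (S : Set Y), (⇑T)^[i] '' S = ((⇑T.symm)^[i]) ⁻¹' S :=
    fun i S => congrFun (Set.image_eq_preimage_of_inverse (hLI i) (hRI i)) S
  -- invariance
  have hsymmMP : MeasurePreserving (⇑T.symm) μm μm := by
    have h1 : MeasurePreserving (T.toMeasurableEquiv) μm μm := hinv
    exact h1.symm T.toMeasurableEquiv
  have hpre : ∀ (i : ℕ) (S : Set Y), MeasurableSet S → μm ((⇑T)^[i] ⁻¹' S) = μm S :=
    fun i S hS => (hinv.iterate i).measure_preimage hS.nullMeasurableSet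
  have him : ∀ (i : ℕ) (S : Set Y), MeasurableSet S → μm ((⇑T)^[i] '' S) = μm S := by
    intro i S hS
    rw [himg_pre i S]
    exact (hsymmMP.iterate i).measure_preimage hS.nullMeasurableSet
  -- notation
  set A : Fin k → ℕ → Set Y := fun l i => (⇑T)^[i] '' B l with hA
  set R := towerRemainder (⇑T) B n with hRdef
  have hAmeas : ∀ l, ∀ i < n l, MeasurableSet (A l i) := hmeas
  have hBmeas : ∀ l, MeasurableSet (B l) := by
    intro l
    have := hmeas l 0 (hn1 l)
    simpa using this
  have hRmeas : MeasurableSet R := by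
    apply MeasurableSet.compl
    exact MeasurableSet.iUnion fun l =>
      (Finset.range (n l)).measurableSet_biUnion
        (fun i hi => hmeas l i (Finset.mem_range.1 hi))
  -- choose δ
  set M : ℝ≥0∞ := ((1 + ∑ l : Fin k, (2 * n l * n l + n l) : ℕ) : ℝ≥0∞) with hMdef
  have hMne : M ≠ ⊤ := ENNReal.natCast_ne_top _
  obtain ⟨δ₁, hδ₁pos, hδ₁top, hc1⟩ := exists_pos_add_mul_lt M hMne hR
  obtain ⟨δ₂, hδ₂pos, hδ₂top, hc2⟩ := exists_pos_add_mul_lt M hMne hXe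
  set δ := min δ₁ δ₂ with hδdef
  have hδpos : 0 < δ := lt_min hδ₁pos hδ₂pos
  have hδtop : δ ≠ ⊤ := fun hc => hδ₁top (top_le_iff.1 (hc ▸ min_le_left δ₁ δ₂))
  have hMδtop : M * δ ≠ ⊤ := ENNReal.mul_ne_top hMne hδtop
  have hc1' : μm R + M * δ < ENNReal.ofReal ε :=
    lt_of_le_of_lt (by gcongr; exact min_le_left _ _) hc1
  have hc2' : ENNReal.ofReal (1 - ε) + M * δ < μm Xe :=
    lt_of_le_of_lt (by gcongr; exact min_le_right _ _) hc2
  -- compacts inside levels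
  have hDex : ∀ (l : Fin k) (i : ℕ), ∃ D : Set Y, D ⊆ A l i ∧ IsCompact D ∧
      (i < n l → μm (A l i \ D) < δ) := by
    intro l i
    by_cases hi : i < n l
    · obtain ⟨D, hDs, hDc, hlt⟩ :=
        (hAmeas l i hi).exists_isCompact_lt_add (μ := μm) (measure_ne_top _ _) hδpos.ne'
      exact ⟨D, hDs, hDc, fun _ =>
        measure_diff_lt_of_lt_add hDc.measurableSet.nullMeasurableSet hDs (measure_ne_top _ _) hlt⟩
    · exact ⟨∅, empty_subset _, isCompact_empty, fun h => absurd h hi⟩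
  choose D hDsub hDcpt hDlt using hDex
  set Kt : Fin k → Set Y := fun l => ⋂ j ∈ Finset.range (n l), (⇑T)^[j] ⁻¹' (D l j) with hKt
  have hKtclosed : ∀ l, IsClosed (Kt l) :=
    fun l => isClosed_biInter fun j _ => (hDcpt l j).isClosed.preimage (hTcont j)
  have hKtcpt : ∀ l, IsCompact (Kt l) := fun l => (hKtclosed l).isCompact
  have hA0 : ∀ l, A l 0 = B l := fun l => by simp [hA]
  have hKtB : ∀ l, Kt l ⊆ B l := by
    intro l x hx
    have h0 := (Set.mem_iInter₂.1 hx) 0 (Finset.mem_range.2 (hn1 l))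
    have hxD : x ∈ D l 0 := by simpa using h0
    have := hDsub l 0 hxD
    rwa [hA0 l] at this
  have hKtlevel : ∀ l, ∀ i < n l, (⇑T)^[i] '' Kt l ⊆ D l i := by
    intro l i hi
    have hsub : Kt l ⊆ (⇑T)^[i] ⁻¹' (D l i) := Set.iInter₂_subset i (Finset.mem_range.2 hi)
    exact (Set.image_mono hsub).trans (Set.image_preimage_subset _ _)
  have hKtlevelA : ∀ l, ∀ (i : ℕ), (⇑T)^[i] '' Kt l ⊆ A l i :=
    fun l i => Set.image_mono (hKtB l)
  have hKtlevelcpt : ∀ l, ∀ (i : ℕ), IsCompact ((⇑T)^[i] '' Kt l) :=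
    fun l i => (hKtcpt l).image (hTcont i)
  -- measure loss per level
  have hloss : ∀ l, ∀ i < n l, μm (A l i \ (⇑T)^[i] '' Kt l) ≤ (n l : ℝ≥0∞) * δ := by
    intro l i hi
    have hdiff : A l i \ (⇑T)^[i] '' Kt l = (⇑T)^[i] '' (B l \ Kt l) := by
      rw [Set.image_diff (hTinj i)]
    have hsub : B l \ Kt l ⊆ ⋃ j ∈ Finset.range (n l), (⇑T)^[j] ⁻¹' (A l j \ D l j) := by
      rintro x ⟨hxB, hxK⟩
      simp only [hKt, Set.mem_iInter, Set.mem_preimage, not_forall] at hxK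
      obtain ⟨j, hj, hxj⟩ := hxK
      exact Set.mem_biUnion hj ⟨Set.mem_image_of_mem _ hxB, hxj⟩
    calc μm (A l i \ (⇑T)^[i] '' Kt l) = μm (B l \ Kt l) := by
          rw [hdiff]; exact him i _ ((hBmeas l).diff (hKtclosed l).measurableSet)
      _ ≤ μm (⋃ j ∈ Finset.range (n l), (⇑T)^[j] ⁻¹' (A l j \ D l j)) := measure_mono hsub
      _ ≤ ∑ j ∈ Finset.range (n l), μm ((⇑T)^[j] ⁻¹' (A l j \ D l j)) :=
          measure_biUnion_finset_le _ _
      _ = ∑ j ∈ Finset.range (n l), μm (A l j \ D l j) :=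
          Finset.sum_congr rfl (fun j hj => hpre j _
            ((hAmeas l j (Finset.mem_range.1 hj)).diff (hDcpt l j).measurableSet))
      _ ≤ ∑ j ∈ Finset.range (n l), δ :=
          Finset.sum_le_sum (fun j hj => (hDlt l j (Finset.mem_range.1 hj)).le)
      _ = (n l : ℝ≥0∞) * δ := by simp [Finset.sum_const, nsmul_eq_mul]
  -- compacts inside level ∩ Xe and remainder ∩ Xe
  have hCex : ∀ (l : Fin k) (i : ℕ), ∃ C : Set Y, C ⊆ A l i ∩ Xe ∧ IsCompact C ∧
      (i < n l → μm ((A l i ∩ Xe) \ C) < δ) := by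
    intro l i
    by_cases hi : i < n l
    · obtain ⟨C, hCs, hCc, hlt⟩ :=
        ((hAmeas l i hi).inter hXem).exists_isCompact_lt_add (μ := μm) (measure_ne_top _ _) hδpos.ne'
      exact ⟨C, hCs, hCc, fun _ =>
        measure_diff_lt_of_lt_add hCc.measurableSet.nullMeasurableSet hCs (measure_ne_top _ _) hlt⟩
    · exact ⟨∅, empty_subset _, isCompact_empty, fun h => absurd h hi⟩
  choose C hCsub hCcpt hClt using hCex
  obtain ⟨CR, hCRsub, hCRcpt, hCRlt⟩ : ∃ C : Set Y, C ⊆ R ∩ Xe ∧ IsCompact C ∧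
      μm ((R ∩ Xe) \ C) < δ := by
    obtain ⟨C, hCs, hCc, hlt⟩ :=
      (hRmeas.inter hXem).exists_isCompact_lt_add (μ := μm) (measure_ne_top _ _) hδpos.ne'
    exact ⟨C, hCs, hCc,
      measure_diff_lt_of_lt_add hCc.measurableSet.nullMeasurableSet hCs (measure_ne_top _ _) hlt⟩
  -- disjointness of the original pieces
  have hAdisjoint : ∀ (l l' : Fin k) (i i' : ℕ), i < n l → i' < n l' → (l, i) ≠ (l', i') →
      Disjoint (A l i) (A l' i') := hdisj
  have hRA : ∀ (l : Fin k) (i : ℕ), i < n l → Disjoint R (A l i) := by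
    intro l i hi
    refine Set.disjoint_left.2 fun x hxR hxA => ?_
    exact hxR (Set.mem_iUnion.2 ⟨l, Set.mem_biUnion (Finset.mem_range.2 hi) hxA⟩)
  -- eventual properties of thickening radius
  have hthick : ∀ P Q : Set Y, IsCompact P → IsClosed Q → Disjoint P Q →
      ∀ᶠ η : ℝ in 𝓝[>] 0, Disjoint (thickening η P) (thickening η Q) := by
    intro P Q hP hQ hPQ
    obtain ⟨r, hr, hdis⟩ := hPQ.exists_thickenings hP hQ
    filter_upwards [Ioc_mem_nhdsGT_of_mem (Set.left_mem_Ico.2 hr)] with η hη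
    exact hdis.mono (thickening_mono hη.2 _) (thickening_mono hη.2 _)
  have hthickdiam : ∀ S : Set Y, EMetric.diam S < ENNReal.ofReal ε →
      ∀ᶠ η : ℝ in 𝓝[>] 0, EMetric.diam (thickening η S) < ENNReal.ofReal ε := by
    intro S hS
    have h2 : Tendsto (fun η : ℝ => 2 * ENNReal.ofReal η) (𝓝[>] (0:ℝ)) (𝓝 0) := by
      have h0 : Tendsto (fun η : ℝ => ENNReal.ofReal η) (𝓝[>] (0:ℝ)) (𝓝 0) := by
        have := (ENNReal.continuous_ofReal.tendsto 0).mono_left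
          (nhdsWithin_le_nhds (s := Set.Ioi (0:ℝ)))
        simpa using this
      have := ENNReal.Tendsto.const_mul (a := 2) h0 (Or.inr (by norm_num))
      simpa using this
    have htend : Tendsto (fun η : ℝ => EMetric.diam S + 2 * ENNReal.ofReal η) (𝓝[>] (0:ℝ))
        (𝓝 (EMetric.diam S)) := by
      have := Tendsto.const_add (EMetric.diam S) h2
      simpa using this
    filter_upwards [htend.eventually_lt_const hS, self_mem_nhdsWithin] with η h1 h2'
    refine lt_of_le_of_lt ?_ h1
    have hη : (0:ℝ) < η := h2'
    have heq : thickening η S = thickening ((η.toNNReal : ℝ)) S := by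
      rw [Real.coe_toNNReal _ hη.le]
    rw [heq]
    refine (Metric.ediam_thickening_le _).trans ?_
    have : (η.toNNReal : ℝ≥0∞) = ENNReal.ofReal η := rfl
    rw [this]
    exact le_rfl
  -- the diameters of the compacts
  have hdiamC : ∀ l, ∀ i < n l, EMetric.diam (C l i) < ENNReal.ofReal ε := by
    intro l i hi
    refine lt_of_le_of_lt (EMetric.diam_mono (hCsub l i)) (hdiam (A l i) ?_)
    exact Or.inl ⟨l, i, hi, rfl⟩
  have hdiamCR : EMetric.diam CR < ENNReal.ofReal ε :=
    lt_of_le_of_lt (EMetric.diam_mono hCRsub) (hdiam R (Or.inr rfl))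
  -- combine eventualities, choose η
  have hcombo : ∀ᶠ η : ℝ in 𝓝[>] 0, (0 < η) ∧
      (∀ l : Fin k, ∀ i ∈ Finset.range (n l), ∀ l' : Fin k, ∀ i' ∈ Finset.range (n l'),
        (l, i) ≠ (l', i') →
        Disjoint (thickening η ((⇑T)^[i] '' Kt l)) (thickening η ((⇑T)^[i'] '' Kt l'))) ∧
      (∀ l : Fin k, ∀ i ∈ Finset.range (n l),
        Disjoint (thickening η ((⇑T)^[i] '' Kt l)) (thickening η CR)) ∧
      (∀ l : Fin k, ∀ i ∈ Finset.range (n l),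
        EMetric.diam (thickening η (C l i)) < ENNReal.ofReal ε) ∧
      EMetric.diam (thickening η CR) < ENNReal.ofReal ε := by
    refine Filter.Eventually.and (self_mem_nhdsWithin) (Filter.Eventually.and ?_
      (Filter.Eventually.and ?_ (Filter.Eventually.and ?_ (hthickdiam CR hdiamCR))))
    · rw [eventually_all]
      intro l
      rw [Filter.eventually_all_finset]
      intro i hi
      rw [eventually_all]
      intro l'
      rw [Filter.eventually_all_finset]
      intro i' hi'
      by_cases hne : (l, i) = (l', i')
      · filter_upwards with η hcon; exact absurd hne hcon
      · have hd : Disjoint ((⇑T)^[i] '' Kt l) ((⇑T)^[i'] '' Kt l') :=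
          (hAdisjoint l l' i i' (Finset.mem_range.1 hi) (Finset.mem_range.1 hi') hne).mono
            (hKtlevelA l i) (hKtlevelA l' i')
        filter_upwards [hthick _ _ (hKtlevelcpt l i) (hKtlevelcpt l' i').isClosed hd]
          with η hdis _
        exact hdis
    · rw [eventually_all]
      intro l
      rw [Filter.eventually_all_finset]
      intro i hi
      have hd : Disjoint ((⇑T)^[i] '' Kt l) CR :=
        ((hRA l i (Finset.mem_range.1 hi)).symm.mono (hKtlevelA l i)
          ((hCRsub.trans (Set.inter_subset_left))))
      exact hthick _ _ (hKtlevelcpt l i) hCRcpt.isClosed hd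
    · rw [eventually_all]
      intro l
      rw [Filter.eventually_all_finset]
      intro i hi
      exact hthickdiam _ (hdiamC l i (Finset.mem_range.1 hi))
  obtain ⟨η, hη0, hcond1, hcond3, hcond4, hcond5⟩ := hcombo.exists
  -- the new open tower
  set B' : Fin k → Set Y :=
    fun l => ⋂ j ∈ Finset.range (n l), (⇑T)^[j] ⁻¹' (thickening η ((⇑T)^[j] '' Kt l)) with hB'
  have hB'open : ∀ l, IsOpen (B' l) := fun l =>
    isOpen_biInter_finset fun j _ => isOpen_thickening.preimage (hTcont j)
  have hlevel_open : ∀ l (i : ℕ), IsOpen ((⇑T)^[i] '' B' l) :=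
    fun l i => iterate_image_open T i (hB'open l)
  have hKtB' : ∀ l, Kt l ⊆ B' l := by
    intro l x hx
    refine Set.mem_iInter₂.2 fun j hj => ?_
    exact self_subset_thickening hη0 _ (Set.mem_image_of_mem _ hx)
  have hlevel_sub : ∀ l, ∀ i < n l,
      (⇑T)^[i] '' B' l ⊆ thickening η ((⇑T)^[i] '' Kt l) := by
    intro l i hi
    have hsub : B' l ⊆ (⇑T)^[i] ⁻¹' (thickening η ((⇑T)^[i] '' Kt l)) :=
      Set.iInter₂_subset i (Finset.mem_range.2 hi)
    exact (Set.image_mono hsub).trans (Set.image_preimage_subset _ _)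
  have hlevel_sup : ∀ l (i : ℕ), (⇑T)^[i] '' Kt l ⊆ (⇑T)^[i] '' B' l :=
    fun l i => Set.image_mono (hKtB' l)
  set R' := towerRemainder (⇑T) B' n with hR'def
  have hR'closed : IsClosed R' := by
    rw [hR'def, towerRemainder]
    exact (isOpen_iUnion fun l => isOpen_biUnion fun i hi => hlevel_open l i).isClosed_compl
  -- remainder measure bound
  have hR'sub : R' ⊆ R ∪ ⋃ l, ⋃ i ∈ Finset.range (n l), (A l i \ (⇑T)^[i] '' Kt l) := by
    intro x hx
    by_cases hxR : x ∈ R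
    · exact Or.inl hxR
    · right
      have hxU : x ∈ ⋃ l, ⋃ i ∈ Finset.range (n l), A l i := by
        by_contra hc
        exact hxR hc
      obtain ⟨l, hl⟩ := Set.mem_iUnion.1 hxU
      obtain ⟨i, hi, hxA⟩ := Set.mem_iUnion₂.1 hl
      refine Set.mem_iUnion.2 ⟨l, Set.mem_biUnion hi ⟨hxA, fun hxK => ?_⟩⟩
      exact hx (Set.mem_iUnion.2 ⟨l, Set.mem_biUnion hi (hlevel_sup l i hxK)⟩)
  have hsum_le_M : (∑ l : Fin k, ((n l : ℝ≥0∞) * ((n l : ℝ≥0∞) * δ))) ≤ M * δ := by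
    rw [hMdef]
    calc (∑ l : Fin k, ((n l : ℝ≥0∞) * ((n l : ℝ≥0∞) * δ)))
        = (∑ l : Fin k, ((n l : ℝ≥0∞) * (n l : ℝ≥0∞))) * δ := by
          rw [Finset.sum_mul]; congr 1; ext l; ring
      _ ≤ ((1 + ∑ l : Fin k, (2 * n l * n l + n l) : ℕ) : ℝ≥0∞) * δ := by
          gcongr
          push_cast
          calc (∑ l : Fin k, ((n l : ℝ≥0∞) * (n l : ℝ≥0∞)))
              ≤ ∑ l : Fin k, (2 * (n l : ℝ≥0∞) * n l + n l) := by
                refine Finset.sum_le_sum fun l _ => ?_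
                calc (n l : ℝ≥0∞) * n l ≤ 2 * (n l : ℝ≥0∞) * n l := by
                      rw [mul_assoc]; exact le_mul_of_one_le_left zero_le (by norm_num)
                  _ ≤ 2 * (n l : ℝ≥0∞) * n l + n l := le_self_add
            _ ≤ 1 + ∑ l : Fin k, (2 * (n l : ℝ≥0∞) * n l + n l) := le_add_self
  have hR'meas : μm R' < ENNReal.ofReal ε := by
    calc μm R' ≤ μm (R ∪ ⋃ l, ⋃ i ∈ Finset.range (n l), (A l i \ (⇑T)^[i] '' Kt l)) :=
        measure_mono hR'sub
      _ ≤ μm R + μm (⋃ l, ⋃ i ∈ Finset.range (n l), (A l i \ (⇑T)^[i] '' Kt l)) :=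
        measure_union_le _ _
      _ ≤ μm R + ∑ l : Fin k, μm (⋃ i ∈ Finset.range (n l), (A l i \ (⇑T)^[i] '' Kt l)) := by
        gcongr
        exact measure_iUnion_fintype_le _ _
      _ ≤ μm R + ∑ l : Fin k, ∑ i ∈ Finset.range (n l), μm (A l i \ (⇑T)^[i] '' Kt l) := by
        refine add_le_add_right (Finset.sum_le_sum fun l _ => measure_biUnion_finset_le _ _) _
      _ ≤ μm R + ∑ l : Fin k, ∑ i ∈ Finset.range (n l), (n l : ℝ≥0∞) * δ := by
        refine add_le_add_right (Finset.sum_le_sum fun l _ => Finset.sum_le_sum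
          fun i hi => hloss l i (Finset.mem_range.1 hi)) _
      _ = μm R + ∑ l : Fin k, ((n l : ℝ≥0∞) * ((n l : ℝ≥0∞) * δ)) := by
        congr 1
        refine Finset.sum_congr rfl fun l _ => ?_
        simp [Finset.sum_const, nsmul_eq_mul]
      _ ≤ μm R + M * δ := add_le_add_right hsum_le_M _
      _ < ENNReal.ofReal ε := hc1'
  -- the new Xe
  set U : Set Y := (⋃ l, ⋃ i ∈ Finset.range (n l),
      (thickening η (C l i) ∩ (⇑T)^[i] '' B' l)) ∪ thickening η CR with hUdef
  have hUopen : IsOpen U :=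
    (isOpen_iUnion fun l => isOpen_biUnion fun i hi =>
      isOpen_thickening.inter (hlevel_open l i)).union isOpen_thickening
  have hWsub : ∀ l, ∀ i ∈ Finset.range (n l), C l i ∩ (⇑T)^[i] '' Kt l ⊆ U := by
    intro l i hi
    intro x hx
    exact Or.inl (Set.mem_iUnion.2 ⟨l, Set.mem_biUnion hi
      ⟨self_subset_thickening hη0 _ hx.1, hlevel_sup l i hx.2⟩⟩)
  have hXesub : Xe ⊆ U ∪ ((⋃ l, ⋃ i ∈ Finset.range (n l),
      ((A l i ∩ Xe) \ (C l i ∩ (⇑T)^[i] '' Kt l))) ∪ ((R ∩ Xe) \ CR)) := by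
    intro x hx
    by_cases hxR : x ∈ R
    · by_cases hxC : x ∈ CR
      · exact Or.inl (Or.inr (self_subset_thickening hη0 _ hxC))
      · exact Or.inr (Or.inr ⟨⟨hxR, hx⟩, hxC⟩)
    · have hxU : x ∈ ⋃ l, ⋃ i ∈ Finset.range (n l), A l i := by
        by_contra hc
        exact hxR hc
      obtain ⟨l, hl⟩ := Set.mem_iUnion.1 hxU
      obtain ⟨i, hi, hxA⟩ := Set.mem_iUnion₂.1 hl
      by_cases hxW : x ∈ C l i ∩ (⇑T)^[i] '' Kt l
      · exact Or.inl (hWsub l i hi hxW)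
      · exact Or.inr (Or.inl (Set.mem_iUnion.2 ⟨l, Set.mem_biUnion hi ⟨⟨hxA, hx⟩, hxW⟩⟩))
  have hUmeas : ENNReal.ofReal (1 - ε) < μm U := by
    have hXebound : μm Xe ≤ μm U + M * δ := by
      calc μm Xe ≤ μm (U ∪ ((⋃ l, ⋃ i ∈ Finset.range (n l),
            ((A l i ∩ Xe) \ (C l i ∩ (⇑T)^[i] '' Kt l))) ∪ ((R ∩ Xe) \ CR))) :=
          measure_mono hXesub
        _ ≤ μm U + (μm (⋃ l, ⋃ i ∈ Finset.range (n l),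
            ((A l i ∩ Xe) \ (C l i ∩ (⇑T)^[i] '' Kt l))) + μm ((R ∩ Xe) \ CR)) := by
          refine (measure_union_le _ _).trans ?_
          exact add_le_add_right (measure_union_le _ _) _
        _ ≤ μm U + ((∑ l : Fin k, ∑ i ∈ Finset.range (n l),
            μm ((A l i ∩ Xe) \ (C l i ∩ (⇑T)^[i] '' Kt l))) + δ) := by
          refine add_le_add_right (add_le_add ?_ hCRlt.le) _
          exact (measure_iUnion_fintype_le _ _).trans
            (Finset.sum_le_sum fun l _ => measure_biUnion_finset_le _ _)
        _ ≤ μm U + ((∑ l : Fin k, ∑ i ∈ Finset.range (n l),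
            (δ + (n l : ℝ≥0∞) * δ)) + δ) := by
          gcongr with l hl i hi
          have hsplit : (A l i ∩ Xe) \ (C l i ∩ (⇑T)^[i] '' Kt l) ⊆
              ((A l i ∩ Xe) \ C l i) ∪ (A l i \ (⇑T)^[i] '' Kt l) := by
            rintro x ⟨hx1, hx2⟩
            by_cases hxC : x ∈ C l i
            · exact Or.inr ⟨hx1.1, fun hk => hx2 ⟨hxC, hk⟩⟩
            · exact Or.inl ⟨hx1, hxC⟩
          calc μm ((A l i ∩ Xe) \ (C l i ∩ (⇑T)^[i] '' Kt l))
              ≤ μm ((A l i ∩ Xe) \ C l i) + μm (A l i \ (⇑T)^[i] '' Kt l) :=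
              (measure_mono hsplit).trans (measure_union_le _ _)
            _ ≤ δ + (n l : ℝ≥0∞) * δ := by
              gcongr
              · exact (hClt l i (Finset.mem_range.1 hi)).le
              · exact hloss l i (Finset.mem_range.1 hi)
        _ ≤ μm U + M * δ := by
          refine add_le_add_right ?_ _
          rw [hMdef]
          push_cast
          calc (∑ l : Fin k, ∑ i ∈ Finset.range (n l), (δ + (n l : ℝ≥0∞) * δ)) + δ
              = (∑ l : Fin k, ((n l : ℝ≥0∞) * (δ + (n l : ℝ≥0∞) * δ))) + δ := by
                congr 1
                exact Finset.sum_congr rfl fun l _ => by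
                  simp [Finset.sum_const, nsmul_eq_mul]; ring
            _ = (∑ l : Fin k, ((n l : ℝ≥0∞) + (n l : ℝ≥0∞) * (n l : ℝ≥0∞))) * δ + 1 * δ := by
                rw [Finset.sum_mul, one_mul]
                congr 1
                exact Finset.sum_congr rfl fun l _ => by ring
            _ = (1 + ∑ l : Fin k, ((n l : ℝ≥0∞) + (n l : ℝ≥0∞) * (n l : ℝ≥0∞))) * δ := by
                rw [add_mul, one_mul]
                ring
            _ ≤ (1 + ∑ l : Fin k, (2 * (n l : ℝ≥0∞) * (n l : ℝ≥0∞) + (n l : ℝ≥0∞))) * δ := by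
                refine mul_le_mul_left (add_le_add_right (Finset.sum_le_sum
                  fun l _ => ?_) 1) δ
                calc (n l : ℝ≥0∞) + (n l : ℝ≥0∞) * (n l : ℝ≥0∞)
                    = (n l : ℝ≥0∞) * (n l : ℝ≥0∞) + (n l : ℝ≥0∞) := add_comm _ _
                  _ ≤ 2 * ((n l : ℝ≥0∞) * (n l : ℝ≥0∞)) + (n l : ℝ≥0∞) :=
                      add_le_add_left (le_mul_of_one_le_left zero_le (by norm_num)) _
                  _ = 2 * (n l : ℝ≥0∞) * (n l : ℝ≥0∞) + (n l : ℝ≥0∞) := by rw [mul_assoc]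
    have := hc2'.trans_le hXebound
    exact (ENNReal.add_lt_add_iff_right hMδtop).1 this
  -- the new tower system
  have hts' : IsTowerSystem (⇑T) B' n := by
    refine ⟨hn1, fun l i hi => (hlevel_open l i).measurableSet, ?_⟩
    intro l l' i i' hi hi' hne
    exact (hcond1 l i (Finset.mem_range.2 hi) l' i' (Finset.mem_range.2 hi') hne).mono
      (hlevel_sub l i hi) (hlevel_sub l' i' hi')
  -- the diameter conditions
  have hdiam' : ∀ A' ∈ towerSets (⇑T) B' n,
      EMetric.diam (A' ∩ U) < ENNReal.ofReal ε := by
    rintro A' hA'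
    rcases hA' with ⟨l, i, hi, rfl⟩ | hA'
    · have hsub : (⇑T)^[i] '' B' l ∩ U ⊆ thickening η (C l i) := by
        rintro x ⟨hx1, hx2⟩
        have hxK : x ∈ thickening η ((⇑T)^[i] '' Kt l) := hlevel_sub l i hi hx1
        rcases hx2 with hx2 | hx2
        · obtain ⟨l', hl'⟩ := Set.mem_iUnion.1 hx2
          obtain ⟨i', hi', hxm⟩ := Set.mem_iUnion₂.1 hl'
          by_cases hee : (l, i) = (l', i')
          · obtain ⟨h1, h2⟩ := Prod.mk.inj hee
            subst h1; subst h2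
            exact hxm.1
          · exfalso
            have hxK' : x ∈ thickening η ((⇑T)^[i'] '' Kt l') :=
              hlevel_sub l' i' (Finset.mem_range.1 hi') hxm.2
            exact Set.disjoint_left.1
              (hcond1 l i (Finset.mem_range.2 hi) l' i' hi' hee) hxK hxK'
        · exfalso
          exact Set.disjoint_left.1 (hcond3 l i (Finset.mem_range.2 hi)) hxK hx2
      exact lt_of_le_of_lt (EMetric.diam_mono hsub) (hcond4 l i (Finset.mem_range.2 hi))
    · rw [Set.mem_singleton_iff] at hA'
      subst hA'
      have hsub : towerRemainder (⇑T) B' n ∩ U ⊆ thickening η CR := by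
        rintro x ⟨hx1, hx2⟩
        rcases hx2 with hx2 | hx2
        · exfalso
          obtain ⟨l', hl'⟩ := Set.mem_iUnion.1 hx2
          obtain ⟨i', hi', hxm⟩ := Set.mem_iUnion₂.1 hl'
          exact hx1 (Set.mem_iUnion.2 ⟨l', Set.mem_biUnion hi' hxm.2⟩)
        · exact hx2
      exact lt_of_le_of_lt (EMetric.diam_mono hsub) hcond5
  -- conclude
  filter_upwards [eventually_closed_lt hR'closed hR'meas, eventually_lt_open hUopen hUmeas]
    with ν h1 h2
  exact ⟨B', n, hts', h1, U, hUopen.measurableSet, h2, hdiam'⟩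

end Main

/-- For an invertible topological dynamical system (`T` a homeomorphism of a
compact metric space) and every `ε > 0`, the function `μ ↦ rank_ε(μ)` is upper
semicontinuous on the set `𝓜_T(X)` of invariant Borel probability measures with
the weak-star topology: every sublevel set `{μ : rank_ε(μ) < t}`, `t ∈ ℝ`, is open. -/
theorem rankEps_usc {X : Type*} [MetricSpace X] [CompactSpace X]
    [MeasurableSpace X] [BorelSpace X]
    (T : X ≃ₜ X) (ε : ℝ) (hε : 0 < ε) :
    ∀ t : ℝ,
      IsOpen {μ : {ν : ProbabilityMeasure X // MeasurePreserving T ν.toMeasure ν.toMeasure} |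
        (((rankEps μ.1.toMeasure T ε : ℕ∞) : ℝ≥0∞) : EReal) < (t : EReal)} := by
  intro t
  rw [isOpen_iff_mem_nhds]
  rintro ⟨μ, hμinv⟩ hmem
  simp only [Set.mem_setOf_eq] at hmem
  have hSne : ∃ m : ℕ, RankEpsLE μ.toMeasure T ε m := by
    by_contra hc
    push_neg at hc
    have hempty : {c : ℕ∞ | ∃ m : ℕ, RankEpsLE μ.toMeasure T ε m ∧ c = m} = ∅ := by
      ext c
      simp only [Set.mem_setOf_eq, Set.mem_empty_iff_false, iff_false, not_exists]
      intro m hm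
      exact absurd hm.1 (hc m)
    rw [rankEps, hempty, sInf_empty] at hmem
    simp at hmem
  classical
  set k₀ := Nat.find hSne with hk₀def
  have hk₀P : RankEpsLE μ.toMeasure T ε k₀ := Nat.find_spec hSne
  have hsinf : rankEps μ.toMeasure T ε = (k₀ : ℕ∞) := by
    apply le_antisymm
    · exact sInf_le ⟨k₀, hk₀P, rfl⟩
    · refine le_sInf ?_
      rintro c ⟨m, hm, rfl⟩
      exact_mod_cast Nat.find_min' hSne hm
  rw [hsinf] at hmem
  have hev := rankEpsLE_eventually T hε hμinv hk₀P
  have hsub : Filter.Tendsto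
      (fun μ' : {ν : ProbabilityMeasure X // MeasurePreserving T ν.toMeasure ν.toMeasure} =>
        μ'.1) (𝓝 ⟨μ, hμinv⟩) (𝓝 μ) := continuous_subtype_val.tendsto _
  have hev2 := hsub.eventually hev
  refine Filter.mem_of_superset hev2 ?_
  intro ν hν
  simp only [Set.mem_setOf_eq]
  have hle : rankEps ν.1.toMeasure T ε ≤ (k₀ : ℕ∞) := sInf_le ⟨k₀, hν, rfl⟩
  refine lt_of_le_of_lt ?_ hmem
  have h1 : ((rankEps ν.1.toMeasure T ε : ℕ∞) : ℝ≥0∞) ≤ ((k₀ : ℕ∞) : ℝ≥0∞) := by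
    exact_mod_cast hle
  exact_mod_cast h1
end
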